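/- Let $L_n^{\{1;n\}}$ be the $(n-1)\times(n-1)$ matrix obtained from the tridiagonal matrix $L_n$ (rows of the form $(\frac{(k-2)(k-1)}{2}, -(k-1)k, \frac{k(k+1)}{2})$) by deleting its first row and last column. Then $L_n^{\{1;n\}}$ is invertible, and the unique solution of $L_n^{\{1;n\}}\mathbf{y} = -\mathbf{1}$ is $\mathbf{y}^* = (\frac{n-1}{2}, \frac{n-2}{3}, \ldots, \frac{2}{n-1}, \frac{1}{n})^\top$, i.e., $y^*_j = \frac{n-j}{j+1}$ for $1 \le j \le n-1$. Moreover, $L_n^{\{1;n\}}\mathbf{y} \ge 0$ implies $\mathbf{y} \le 0$ componentwise. -/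
import Mathlib


open Matrix

lemma fin_sum_ite_aux {p : ℕ} (c : ℕ) (f : Fin p → ℝ) :
    (∑ j : Fin p, if (j : ℕ) = c then f j else 0) = if h : c < p then f ⟨c, h⟩ else 0 := by
  by_cases h : c < p
  · rw [dif_pos h, Finset.sum_eq_single (⟨c, h⟩ : Fin p)]
    · simp
    · intro b _ hb
      exact if_neg (fun hc => hb (Fin.ext hc))
    · intro hmem; exact absurd (Finset.mem_univ _) hmem
  · rw [dif_neg h]
    refine Finset.sum_eq_zero fun j _ => if_neg fun hc => h ?_
    omega

/-- Let `M = L_n^{{1;n}}` be obtained from the tridiagonal matrix `L_n` (rows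
`((k-2)(k-1)/2, -(k-1)k, k(k+1)/2)`) by deleting its first row and last column. Then
`M` is invertible, the unique solution of `M y = -1` is `y*_j = (n-j)/(j+1)`, and
`M y ≥ 0` implies `y ≤ 0` componentwise. Here row `r` of `M` corresponds to row
`k = r+2` of `L_n` and column `j` to column `j` of `L_n` (1-based). -/
theorem stmt_19 (n : ℕ) (hn : 2 ≤ n) (M : Matrix (Fin (n - 1)) (Fin (n - 1)) ℝ)
    (hM : ∀ r j : Fin (n - 1), M r j =
      -- 1-based row index `k = r.1 + 2`, 1-based column index `j' = j.1 + 1`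
      if j.1 + 1 = r.1 + 2 then ((r.1 : ℝ) + 2) * ((r.1 : ℝ) + 3) / 2
      else if j.1 + 2 = r.1 + 2 then -(((r.1 : ℝ) + 1) * ((r.1 : ℝ) + 2))
      else if j.1 + 3 = r.1 + 2 then (r.1 : ℝ) * ((r.1 : ℝ) + 1) / 2
      else 0)
    (ystar : Fin (n - 1) → ℝ)
    (hystar : ∀ j : Fin (n - 1), ystar j = ((n : ℝ) - ((j.1 : ℝ) + 1)) / ((j.1 : ℝ) + 2)) :
    IsUnit M ∧
    M.mulVec ystar = (fun _ => -1) ∧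
    (∀ y : Fin (n - 1) → ℝ, M.mulVec y = (fun _ => -1) → y = ystar) ∧
    ∀ y : Fin (n - 1) → ℝ, (∀ i, 0 ≤ M.mulVec y i) → ∀ j, y j ≤ 0 := by
  have key : ∀ (y : Fin (n - 1) → ℝ) (r : Fin (n - 1)), M.mulVec y r =
      (if h : r.1 + 1 < n - 1 then
        ((r.1 : ℝ) + 2) * ((r.1 : ℝ) + 3) / 2 * y ⟨r.1 + 1, h⟩ else 0)
      - ((r.1 : ℝ) + 1) * ((r.1 : ℝ) + 2) * y r
      + (r.1 : ℝ) * ((r.1 : ℝ) + 1) / 2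
          * y ⟨r.1 - 1, lt_of_le_of_lt (Nat.sub_le _ _) r.2⟩ := by
    intro y r
    have hdec : ∀ j : Fin (n - 1), M r j * y j =
        (if (j : ℕ) = r.1 + 1 then ((r.1 : ℝ) + 2) * ((r.1 : ℝ) + 3) / 2 * y j else 0) +
        (if (j : ℕ) = r.1 then -(((r.1 : ℝ) + 1) * ((r.1 : ℝ) + 2)) * y j else 0) +
        (if (j : ℕ) = r.1 - 1 then (r.1 : ℝ) * ((r.1 : ℝ) + 1) / 2 * y j else 0) := by
      intro j
      rw [hM]
      rcases eq_or_ne (j : ℕ) (r.1 + 1) with h1 | h1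
      · rw [if_pos (by omega), if_pos h1, if_neg (by omega), if_neg (by omega)]
        ring
      rcases eq_or_ne (j : ℕ) r.1 with h2 | h2
      · rw [if_neg (by omega), if_pos (by omega), if_neg h1, if_pos h2]
        by_cases h3 : (j : ℕ) = r.1 - 1
        · have hr0 : r.1 = 0 := by omega
          have hc : ((r.1 : ℕ) : ℝ) = 0 := by rw [hr0]; simp
          rw [if_pos h3, hc]; ring
        · rw [if_neg h3]; ring
      rcases eq_or_ne (j : ℕ) (r.1 - 1) with h3 | h3
      · have hr : 1 ≤ r.1 := by omega
        rw [if_neg (by omega), if_neg (by omega), if_pos (by omega), if_neg h1,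
          if_neg h2, if_pos h3]
        ring
      · rw [if_neg (by omega), if_neg (by omega), if_neg (by omega), if_neg h1,
          if_neg h2, if_neg h3]
        ring
    have : M.mulVec y r = ∑ j : Fin (n - 1), M r j * y j := rfl
    rw [this, Finset.sum_congr rfl (fun j _ => hdec j), Finset.sum_add_distrib,
      Finset.sum_add_distrib, fin_sum_ite_aux, fin_sum_ite_aux, fin_sum_ite_aux,
      dif_pos r.2, dif_pos (lt_of_le_of_lt (Nat.sub_le _ _) r.2)]
    simp only [Fin.eta]
    ring
  -- ystar is positive
  have hypos : ∀ j : Fin (n - 1), 0 < ystar j := by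
    intro j
    rw [hystar]
    apply div_pos
    · have hj : j.1 + 1 < n := by have := j.2; omega
      have : ((j.1 : ℝ) + 1) < n := by exact_mod_cast hj
      linarith
    · positivity
  -- M ystar = -1
  have hys : M.mulVec ystar = (fun _ => -1) := by
    funext r
    rw [key]
    by_cases h : r.1 + 1 < n - 1
    · rw [dif_pos h, hystar, hystar, hystar]
      by_cases hr0 : r.1 = 0
      · simp only [hr0]
        norm_num
        field_simp
        ring
      · have h1 : 1 ≤ r.1 := by omega
        have hc : ((r.1 - 1 : ℕ) : ℝ) = (r.1 : ℝ) - 1 := by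
          have : (1 : ℕ) ≤ r.1 := h1
          push_cast [this]
          ring
        have e1 : ((r.1 : ℕ) : ℝ) + 1 ≠ 0 := by positivity
        have e2 : ((r.1 : ℕ) : ℝ) + 2 ≠ 0 := by positivity
        have e3 : ((r.1 : ℕ) : ℝ) + 3 ≠ 0 := by positivity
        push_cast [hc]
        have e4 : ((r.1 : ℕ) : ℝ) - 1 + 2 ≠ 0 := by
          have : (0:ℝ) ≤ (r.1 : ℝ) := Nat.cast_nonneg _
          intro hx; nlinarith
        field_simp
        ring
    · have hrn : (r.1 : ℝ) + 2 = n := by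
        have : r.1 + 2 = n := by have := r.2; omega
        exact_mod_cast this
      rw [dif_neg h, hystar, hystar, ← hrn]
      by_cases hr0 : r.1 = 0
      · simp only [hr0]
        norm_num
      · have h1 : 1 ≤ r.1 := by omega
        have hc : ((r.1 - 1 : ℕ) : ℝ) = (r.1 : ℝ) - 1 := by
          have : (1 : ℕ) ≤ r.1 := h1
          push_cast [this]
          ring
        have e1 : ((r.1 : ℕ) : ℝ) + 1 ≠ 0 := by positivity
        have e2 : ((r.1 : ℕ) : ℝ) + 2 ≠ 0 := by positivity
        push_cast [hc]
        have e4 : ((r.1 : ℕ) : ℝ) - 1 + 2 ≠ 0 := by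
          have : (0:ℝ) ≤ (r.1 : ℝ) := Nat.cast_nonneg _
          intro hx; nlinarith
        field_simp
        ring
  -- comparison principle
  have hcomp : ∀ y : Fin (n - 1) → ℝ, (∀ i, 0 ≤ M.mulVec y i) → ∀ j, y j ≤ 0 := by
    intro y hy
    have hne : Nonempty (Fin (n - 1)) := ⟨⟨0, by omega⟩⟩
    obtain ⟨i, hi⟩ := Finite.exists_max (fun j => y j / ystar j)
    by_cases ht : y i / ystar i ≤ 0
    · intro j
      have hp := hypos j
      have hle : y j / ystar j ≤ 0 := le_trans (hi j) ht
      by_contra hcon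
      push_neg at hcon
      have := div_pos hcon hp
      linarith
    · exfalso
      push_neg at ht
      set t := y i / ystar i with htdef
      have hznn : ∀ j, 0 ≤ t * ystar j - y j := by
        intro j
        have hp := hypos j
        have := (div_le_iff₀ hp).mp (hi j)
        linarith
      set z : Fin (n - 1) → ℝ := fun j => t * ystar j - y j with hz
      have hzi : z i = 0 := by
        simp only [hz]
        rw [htdef, div_mul_cancel₀ _ (hypos i).ne']
        ring
      have h1 : M.mulVec z i = -t - M.mulVec y i := by
        have hzz : z = t • ystar - y := by
          funext j; simp [hz, smul_eq_mul]
        rw [hzz, Matrix.mulVec_sub, Matrix.mulVec_smul, hys]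
        simp [smul_eq_mul]
      have h2 : 0 ≤ M.mulVec z i := by
        rw [key z i, hzi, mul_zero, sub_zero]
        have c1 : (0:ℝ) ≤ (i.1 : ℝ) * ((i.1 : ℝ) + 1) / 2 := by positivity
        have c3 := hznn ⟨i.1 - 1, lt_of_le_of_lt (Nat.sub_le _ _) i.2⟩
        split_ifs with h
        · have c2 : (0:ℝ) ≤ ((i.1 : ℝ) + 2) * ((i.1 : ℝ) + 3) / 2 := by positivity
          have c4 := hznn ⟨i.1 + 1, h⟩
          exact add_nonneg (mul_nonneg c2 c4) (mul_nonneg c1 c3)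
        · simpa using mul_nonneg c1 c3
      have h3 := hy i
      linarith [h1 ▸ h2]
  -- kernel is trivial
  have hker : ∀ y : Fin (n - 1) → ℝ, M.mulVec y = 0 → y = 0 := by
    intro y hy0
    funext j
    have h1 := hcomp y (fun i => by rw [hy0]; simp) j
    have h2 := hcomp (-y) (fun i => by rw [Matrix.mulVec_neg, hy0]; simp) j
    simp only [Pi.neg_apply] at h2
    simp only [Pi.zero_apply]
    linarith
  refine ⟨?_, hys, ?_, hcomp⟩
  · rw [Matrix.isUnit_iff_isUnit_det, isUnit_iff_ne_zero]
    intro hdet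
    obtain ⟨v, hv0, hv⟩ := (Matrix.exists_mulVec_eq_zero_iff).mpr hdet
    exact hv0 (hker v hv)
  · intro y hy
    have hd : M.mulVec (y - ystar) = 0 := by
      rw [Matrix.mulVec_sub, hy, hys]
      funext j; simp
    have := hker _ hd
    funext j
    have hj := congrFun this j
    simp only [Pi.sub_apply, Pi.zero_apply, sub_eq_zero] at hj
    exact hj
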